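/- The shadowed-Rician density f(x) = α e^{−βx} ₁F₁(m; 1; δx) on (0,∞), with α = (1/(2b))(2bm/(2bm+Ω))^m, β = 1/(2b), δ = Ω/(2b(2bm+Ω)), b > 0, Ω > 0, m > 0 and δ < β, integrates to 1 when m is a positive integer. -/

import Mathlib

open MeasureTheory Real

/-- The confluent hypergeometric function ₁F₁(m; 1; z) as a series,
using (1)_k = k! so the coefficient is (m)_k / (k!)². -/
noncomputable def hyp1F1 (m : ℝ) (z : ℝ) : ℝ :=
  ∑' k : ℕ, (ascPochhammer ℝ k).eval m / ((k.factorial : ℝ) ^ 2) * z ^ k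

lemma integrable_pow_exp (k : ℕ) {β : ℝ} (hβ : 0 < β) :
    IntegrableOn (fun x : ℝ => x ^ k * Real.exp (-β * x)) (Set.Ioi 0) := by
  apply integrable_of_isBigO_exp_neg (half_pos hβ)
  · exact ((continuous_pow k).mul (Real.continuous_exp.comp
      (continuous_const.mul continuous_id))).continuousOn
  · rw [Asymptotics.isBigO_iff]
    refine ⟨1, ?_⟩
    have h := tendsto_rpow_mul_exp_neg_mul_atTop_nhds_zero (k : ℝ) (β/2) (half_pos hβ)
    have h2 : Filter.Tendsto (fun x : ℝ => x ^ k * Real.exp (-β * x) / Real.exp (-(β/2) * x))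
        Filter.atTop (nhds 0) := by
      apply h.congr'
      filter_upwards [Filter.eventually_gt_atTop (0:ℝ)] with x hx
      rw [Real.rpow_natCast, mul_div_assoc, ← Real.exp_sub]
      congr 2
      ring
    have hevt := h2.eventually (gt_mem_nhds (show (0:ℝ) < 1 by norm_num))
    filter_upwards [hevt, Filter.eventually_gt_atTop (0:ℝ)] with x hx' hx0
    have hx : x ^ k * Real.exp (-β * x) / Real.exp (-(β/2) * x) ≤ 1 := le_of_lt hx'
    rw [Real.norm_eq_abs, Real.norm_eq_abs, abs_of_nonneg (by positivity),
      abs_of_nonneg (Real.exp_pos _).le, one_mul]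
    have hE : (0:ℝ) < Real.exp (-(β/2) * x) := Real.exp_pos _
    calc x ^ k * Real.exp (-β * x)
        = x ^ k * Real.exp (-β * x) / Real.exp (-(β/2) * x) * Real.exp (-(β/2) * x) := by
          field_simp
      _ ≤ 1 * Real.exp (-(β/2) * x) := by
          apply mul_le_mul_of_nonneg_right hx hE.le
      _ = Real.exp (-(β/2) * x) := one_mul _

lemma integral_pow_exp (k : ℕ) {β : ℝ} (hβ : 0 < β) :
    ∫ x in Set.Ioi (0:ℝ), x ^ k * Real.exp (-β * x) = k.factorial / β ^ (k+1) := by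
  have h := integral_rpow_mul_exp_neg_mul_Ioi (a := (k:ℝ)+1) (r := β) (by positivity) hβ
  rw [show ((k:ℝ)+1-1) = (k:ℝ) by ring] at h
  have heq : ∫ x in Set.Ioi (0:ℝ), x ^ k * Real.exp (-β * x)
      = ∫ x in Set.Ioi (0:ℝ), x ^ ((k:ℝ)) * Real.exp (-(β * x)) := by
    apply setIntegral_congr_fun measurableSet_Ioi
    intro x hx
    show x ^ k * Real.exp (-β * x) = x ^ ((k:ℝ)) * Real.exp (-(β * x))
    rw [Real.rpow_natCast, neg_mul]
  rw [heq, h, Real.Gamma_nat_eq_factorial, show ((k:ℝ)+1) = ((k+1 : ℕ) : ℝ) by push_cast; ring,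
    Real.rpow_natCast, one_div, inv_pow, div_eq_inv_mul]

theorem shadowed_rician_density_integrates_to_one
    (b Ω : ℝ) (m : ℕ) (hb : 0 < b) (hΩ : 0 < Ω) (hm : 0 < m)
    (α β δ : ℝ)
    (hα : α = (1 / (2 * b)) * (2 * b * m / (2 * b * m + Ω)) ^ (m : ℕ))
    (hβ : β = 1 / (2 * b))
    (hδ : δ = Ω / (2 * b * (2 * b * m + Ω))) :
    ∫ x in Set.Ioi (0 : ℝ),
        α * Real.exp (-β * x) * hyp1F1 (m : ℝ) (δ * x) = 1 := by
  have hm0 : (0:ℝ) < (m:ℝ) := by exact_mod_cast hm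
  have hc : 0 < 2*b*(m:ℝ) + Ω := by positivity
  have hβ0 : 0 < β := by rw [hβ]; positivity
  have hδ0 : 0 < δ := by rw [hδ]; positivity
  set r : ℝ := δ / β with hr_def
  have hr0 : 0 < r := div_pos hδ0 hβ0
  have hrval : r = Ω / (2*b*(m:ℝ) + Ω) := by
    rw [hr_def, hδ, hβ]
    field_simp
  have hr1 : r < 1 := by
    rw [hrval, div_lt_one hc]; nlinarith
  have h1r : 1 - r = 2*b*(m:ℝ) / (2*b*(m:ℝ) + Ω) := by
    rw [hrval]; field_simp; ring
  have hα0 : 0 < α := by rw [hα]; positivity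
  -- the pochhammer value
  have hpoch : ∀ k : ℕ, (ascPochhammer ℝ k).eval (m : ℝ)
      = (k.factorial : ℝ) * ((k + (m-1)).choose (m-1) : ℝ) := by
    intro k
    rw [← ascPochhammer_eval_cast, ascPochhammer_nat_eq_ascFactorial,
      Nat.ascFactorial_eq_factorial_mul_choose']
    have h1 : m + k - 1 = k + (m-1) := by omega
    have h2 : (k + (m-1)).choose k = (k + (m-1)).choose (m-1) := by
      have := Nat.choose_symm (n := k + (m-1)) (k := m-1) (by omega)
      rw [show k + (m-1) - (m-1) = k by omega] at this
      exact this
    rw [h1, h2]; push_cast; ring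
  set F : ℕ → ℝ → ℝ := fun k x => α * Real.exp (-β*x) *
      ((ascPochhammer ℝ k).eval (m:ℝ) / ((k.factorial : ℝ) ^ 2) * (δ*x) ^ k) with hF
  have hC : ∀ k : ℕ, ∀ x : ℝ, F k x =
      (α * (ascPochhammer ℝ k).eval (m:ℝ) / ((k.factorial : ℝ) ^ 2) * δ ^ k)
        * (x ^ k * Real.exp (-β * x)) := by
    intro k x; rw [hF]; simp only [mul_pow]; ring
  have hInt : ∀ k : ℕ, IntegrableOn (F k) (Set.Ioi 0) := by
    intro k
    have := (integrable_pow_exp k hβ0).const_mul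
      (α * (ascPochhammer ℝ k).eval (m:ℝ) / ((k.factorial : ℝ) ^ 2) * δ ^ k)
    exact IntegrableOn.congr_fun this (fun x _ => (hC k x).symm) measurableSet_Ioi
  -- value of each integral
  have hval : ∀ k : ℕ, ∫ x in Set.Ioi (0:ℝ), F k x
      = (α / β) * (((k + (m-1)).choose (m-1) : ℝ) * r ^ k) := by
    intro k
    rw [show (∫ x in Set.Ioi (0:ℝ), F k x) = ∫ x in Set.Ioi (0:ℝ),
        (α * (ascPochhammer ℝ k).eval (m:ℝ) / ((k.factorial : ℝ) ^ 2) * δ ^ k)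
          * (x ^ k * Real.exp (-β * x)) from
      setIntegral_congr_fun measurableSet_Ioi (fun x _ => hC k x)]
    rw [MeasureTheory.integral_const_mul, integral_pow_exp k hβ0, hpoch k, hr_def, div_pow]
    have hk : (k.factorial : ℝ) ≠ 0 := Nat.cast_ne_zero.mpr k.factorial_ne_zero
    field_simp
    ring
  -- nonnegativity of F k on Ioi 0
  have hFnn : ∀ k : ℕ, ∀ x ∈ Set.Ioi (0:ℝ), 0 ≤ F k x := by
    intro k x hx
    have hp : 0 ≤ (ascPochhammer ℝ k).eval (m:ℝ) := by
      rw [hpoch k]; positivity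
    have : (0:ℝ) < x := hx
    rw [hF]
    have : 0 ≤ (δ * x) ^ k := by positivity
    positivity
  -- the HasSum of the binomial series
  have hS : HasSum (fun k : ℕ => ((k + (m-1)).choose (m-1) : ℝ) * r ^ k)
      (1 / (1 - r) ^ ((m-1) + 1)) :=
    hasSum_choose_mul_geometric_of_norm_lt_one (m-1)
      (by rw [Real.norm_eq_abs, abs_of_pos hr0]; exact hr1)
  have hm1 : (m - 1) + 1 = m := by omega
  rw [hm1] at hS
  have hSum : Summable (fun k : ℕ => ∫ x in Set.Ioi (0:ℝ), ‖F k x‖) := by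
    have : (fun k : ℕ => ∫ x in Set.Ioi (0:ℝ), ‖F k x‖)
        = fun k : ℕ => (α / β) * (((k + (m-1)).choose (m-1) : ℝ) * r ^ k) := by
      funext k
      rw [← hval k]
      exact setIntegral_congr_fun measurableSet_Ioi
        (fun x hx => Real.norm_of_nonneg (hFnn k x hx))
    rw [this]
    exact (hS.summable).mul_left _
  have hswap := MeasureTheory.integral_tsum_of_summable_integral_norm hInt hSum
  have hpt : ∀ x : ℝ, α * Real.exp (-β * x) * hyp1F1 (m : ℝ) (δ * x) = ∑' k, F k x := by
    intro x
    rw [hyp1F1, hF, ← tsum_mul_left]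
  calc ∫ x in Set.Ioi (0:ℝ), α * Real.exp (-β * x) * hyp1F1 (m : ℝ) (δ * x)
      = ∫ x in Set.Ioi (0:ℝ), ∑' k, F k x := by
        exact setIntegral_congr_fun measurableSet_Ioi (fun x _ => hpt x)
    _ = ∑' k, ∫ x in Set.Ioi (0:ℝ), F k x := hswap.symm
    _ = (α / β) * (1 / (1 - r) ^ m) := by
        rw [show (fun k : ℕ => ∫ x in Set.Ioi (0:ℝ), F k x)
          = fun k : ℕ => (α / β) * (((k + (m-1)).choose (m-1) : ℝ) * r ^ k) from
          funext hval]
        exact (hS.mul_left (α / β)).tsum_eq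
    _ = 1 := by
        have hαβ : α / β = (1 - r) ^ m := by
          rw [hα, hβ, h1r]
          field_simp
        rw [hαβ]
        have h1rpos : (0:ℝ) < 1 - r := by rw [h1r]; positivity
        rw [mul_one_div, div_self (by positivity)]
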